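/- Under the Logit model with constant unit costs, if p_f are profit-maximizing prices for firm f (all finite and interior), then for any two products j, k offered by firm f: (p_j - c_j) - (p_k - c_k) = -(1/w_j'(p_j) - 1/w_k'(p_k)). In particular, if w_j = w_k = w is a common, separable, strictly concave-in-price utility and c_j > c_k, then the profit-optimal markup of the higher-cost product is strictly lower: p_j - c_j < p_k - c_k. -/

import Mathlib

open Filter Set

noncomputable def logitP17 {J : ℕ} (w : Fin J → ℝ → ℝ) (v : Fin J → ℝ) (θ : ℝ)
    (p : Fin J → ℝ) (j : Fin J) : ℝ :=
  Real.exp (w j (p j) + v j) / (Real.exp θ + ∑ k, Real.exp (w k (p k) + v k))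

noncomputable def profit17 {J : ℕ} (w : Fin J → ℝ → ℝ) (v : Fin J → ℝ) (θ : ℝ)
    (c : Fin J → ℝ) (Jf : Finset (Fin J)) (p : Fin J → ℝ) : ℝ :=
  ∑ j ∈ Jf, logitP17 w v θ p j * (p j - c j)

lemma foc17 {J : ℕ} (w w' : Fin J → ℝ → ℝ) (v : Fin J → ℝ) (θ : ℝ)
    (c : Fin J → ℝ) (Jf : Finset (Fin J))
    (hd : ∀ k : Fin J, ∀ x > (0:ℝ), HasDerivAt (w k) (w' k x) x)
    (hneg : ∀ k : Fin J, ∀ x > (0:ℝ), w' k x < 0)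
    (p : Fin J → ℝ) (hp : ∀ i, 0 < p i)
    (hmax : ∀ q : Fin J → ℝ, (∀ i, i ∉ Jf → q i = p i) → (∀ i, 0 ≤ q i) →
      profit17 w v θ c Jf q ≤ profit17 w v θ c Jf p)
    (j : Fin J) (hj : j ∈ Jf) :
    (p j - c j) + (w' j (p j))⁻¹ = profit17 w v θ c Jf p := by
  set A : ℝ := Real.exp θ + ∑ k ∈ Finset.univ.erase j, Real.exp (w k (p k) + v k) with hA_def
  set B : ℝ := ∑ i ∈ Jf.erase j, Real.exp (w i (p i) + v i) * (p i - c i) with hB_def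
  set h : ℝ → ℝ := fun x => Real.exp (w j x + v j) with hh_def
  set F : ℝ → ℝ := fun x => (B + h x * (x - c j)) / (A + h x) with hF_def
  have hA : 0 < A := by
    apply add_pos_of_pos_of_nonneg (Real.exp_pos θ)
    exact Finset.sum_nonneg fun _ _ => (Real.exp_pos _).le
  have hE : ∀ x : ℝ, 0 < A + h x := fun x =>
    add_pos hA (Real.exp_pos _)
  have F_eq : ∀ x : ℝ, F x = profit17 w v θ c Jf (Function.update p j x) := by
    intro x
    have hden : Real.exp θ + ∑ k, Real.exp (w k (Function.update p j x k) + v k)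
        = A + h x := by
      rw [hA_def]
      rw [← Finset.add_sum_erase Finset.univ _ (Finset.mem_univ j)]
      have : ∀ k ∈ Finset.univ.erase j,
          Real.exp (w k (Function.update p j x k) + v k) = Real.exp (w k (p k) + v k) := by
        intro k hk
        rw [Function.update_of_ne (Finset.ne_of_mem_erase hk)]
      rw [Finset.sum_congr rfl this, Function.update_self]
      ring
    have hnum : ∑ i ∈ Jf, Real.exp (w i (Function.update p j x i) + v i)
        * (Function.update p j x i - c i) = B + h x * (x - c j) := by
      rw [← Finset.add_sum_erase Jf _ hj, hB_def]
      have : ∀ i ∈ Jf.erase j,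
          Real.exp (w i (Function.update p j x i) + v i) * (Function.update p j x i - c i)
          = Real.exp (w i (p i) + v i) * (p i - c i) := by
        intro i hi
        rw [Function.update_of_ne (Finset.ne_of_mem_erase hi)]
      rw [Finset.sum_congr rfl this, Function.update_self]
      ring
    simp only [hF_def, profit17, logitP17, hden]
    rw [← hnum, Finset.sum_div]
    apply Finset.sum_congr rfl
    intro i _
    rw [div_mul_eq_mul_div]
  -- derivative of F at p j
  have hh' : HasDerivAt h (h (p j) * w' j (p j)) (p j) := by
    simpa using (HasDerivAt.exp ((hd j (p j) (hp j)).add_const (v j)))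
  have hnumd : HasDerivAt (fun x => B + h x * (x - c j))
      (h (p j) * w' j (p j) * (p j - c j) + h (p j) * 1) (p j) := by
    exact ((hh'.mul ((hasDerivAt_id (p j)).sub_const (c j))).const_add B)
  have hdend : HasDerivAt (fun x => A + h x) (h (p j) * w' j (p j)) (p j) :=
    hh'.const_add A
  have hFd : HasDerivAt F
      (((h (p j) * w' j (p j) * (p j - c j) + h (p j) * 1) * (A + h (p j))
        - (B + h (p j) * (p j - c j)) * (h (p j) * w' j (p j))) / (A + h (p j)) ^ 2)
      (p j) := hnumd.div hdend (ne_of_gt (hE (p j)))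
  -- local max
  have hlm : IsLocalMax F (p j) := by
    have hev : ∀ᶠ x in nhds (p j), (0:ℝ) < x := eventually_gt_nhds (hp j)
    have hFp : F (p j) = profit17 w v θ c Jf p := by
      rw [F_eq (p j), Function.update_eq_self]
    filter_upwards [hev] with x hx
    rw [F_eq x, hFp]
    apply hmax
    · intro i hi
      have hij : i ≠ j := fun hij => hi (by rw [hij]; exact hj)
      exact Function.update_of_ne hij x p
    · intro i
      rcases eq_or_ne i j with rfl | hij
      · rw [Function.update_self]; exact hx.le
      · rw [Function.update_of_ne hij]; exact (hp i).le
  have hD0 := hlm.hasDerivAt_eq_zero hFd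
  -- algebra
  have hπ : B + h (p j) * (p j - c j) = profit17 w v θ c Jf p * (A + h (p j)) := by
    have := F_eq (p j)
    rw [Function.update_eq_self] at this
    rw [hF_def] at this
    field_simp at this
    rw [div_eq_iff (ne_of_gt (hE (p j)))] at this
    linarith [this]
  have hnum0 : (h (p j) * w' j (p j) * (p j - c j) + h (p j) * 1) * (A + h (p j))
      - (B + h (p j) * (p j - c j)) * (h (p j) * w' j (p j)) = 0 := by
    rcases div_eq_zero_iff.mp hD0 with h1 | h1
    · exact h1
    · exact absurd h1 (pow_ne_zero 2 (ne_of_gt (hE (p j))))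
  set π := profit17 w v θ c Jf p
  rw [hπ] at hnum0
  have hwne : w' j (p j) ≠ 0 := ne_of_lt (hneg j (p j) (hp j))
  have hhpos : (0:ℝ) < h (p j) := Real.exp_pos _
  have hEpos := hE (p j)
  have key : w' j (p j) * (p j - c j) + 1 = π * w' j (p j) := by
    have : h (p j) * (A + h (p j)) * (w' j (p j) * (p j - c j) + 1 - π * w' j (p j)) = 0 := by
      ring_nf
      ring_nf at hnum0
      linarith
    have hne : h (p j) * (A + h (p j)) ≠ 0 := ne_of_gt (mul_pos hhpos hEpos)
    have := (mul_eq_zero.mp this).resolve_left hne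
    linarith
  field_simp
  linarith [key]

theorem stmt_17 {J : ℕ} (w w' : Fin J → ℝ → ℝ) (v : Fin J → ℝ) (θ : ℝ)
    (c : Fin J → ℝ) (Jf : Finset (Fin J)) (hc : ∀ j, 0 ≤ c j)
    (hd : ∀ k : Fin J, ∀ x > (0:ℝ), HasDerivAt (w k) (w' k x) x)
    (hneg : ∀ k : Fin J, ∀ x > (0:ℝ), w' k x < 0)
    (p : Fin J → ℝ) (hp : ∀ i, 0 < p i)
    -- p_f are (interior) profit-maximizing prices for firm f
    (hmax : ∀ q : Fin J → ℝ, (∀ i, i ∉ Jf → q i = p i) → (∀ i, 0 ≤ q i) →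
      profit17 w v θ c Jf q ≤ profit17 w v θ c Jf p) :
    -- markup-difference identity
    (∀ j ∈ Jf, ∀ k ∈ Jf,
      (p j - c j) - (p k - c k) = -((w' j (p j))⁻¹ - (w' k (p k))⁻¹)) ∧
    -- common separable, strictly concave-in-price utility: higher cost ⇒ lower markup
    (∀ w0 w0' : ℝ → ℝ, (∀ j ∈ Jf, w j = w0) → (∀ j ∈ Jf, w' j = w0') →
      StrictAntiOn w0' (Set.Ioi 0) →
      ∀ j ∈ Jf, ∀ k ∈ Jf, c k < c j → p j - c j < p k - c k) := by
  have ident : ∀ j ∈ Jf, ∀ k ∈ Jf,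
      (p j - c j) - (p k - c k) = -((w' j (p j))⁻¹ - (w' k (p k))⁻¹) := by
    intro j hj k hk
    have h1 := foc17 w w' v θ c Jf hd hneg p hp hmax j hj
    have h2 := foc17 w w' v θ c Jf hd hneg p hp hmax k hk
    linarith
  refine ⟨ident, ?_⟩
  intro w0 w0' hw0 hw0' hanti j hj k hk hck
  by_contra hcon
  push_neg at hcon
  -- p j - c j ≥ p k - c k, so p j > p k
  have hpk : p k < p j := by linarith
  have hwj : w0' (p j) < w0' (p k) := hanti (hp k) (hp j) hpk
  have hwkneg : w0' (p k) < 0 := by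
    have := hneg k (p k) (hp k); rwa [hw0' k hk] at this
  have hwjneg : w0' (p j) < 0 := lt_trans hwj hwkneg
  have hinv : (w0' (p k))⁻¹ < (w0' (p j))⁻¹ := by
    exact (inv_lt_inv_of_neg hwkneg hwjneg).mpr hwj
  have := ident j hj k hk
  rw [hw0' j hj, hw0' k hk] at this
  linarith
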